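/- arXiv:1811.01007 — 2 statements merged into one kernel-verified Lean document; each statement's English description precedes it below -/
import Mathlib

section
/- For every k = 0, …, e−1 one has c_•^{(k)}(1) = c_•^{(k)}(2); that is, the greatest common divisors of the numerators of the leading exponents of the k-th derived surfaces agree for the two choices of recursion. -/
/-- The data of a reduced irreducible quasi-ordinary prototype surface branch
`ζ = Σ_{j=1}^e x₁^{λ_{1,j}} x₂^{λ_{2,j}}` together with, for each choice `i ∈ {1,2}`
of the recursion, the derived exponent sequences `λ^{(k)}_{u,j}(i)`, the lowest-terms
representations `λ^{(k)}_{u,1}(i) = n_u^{(k)}(i) / m_u^{(k)}(i)` of the leading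
exponents, and the minimal nonnegative integers `r_i^{(k)}, s_i^{(k)}` with
`m_ĩ^{(k)}(i)·s_i^{(k)} − n_ĩ^{(k)}(i)·r_i^{(k)} = 1`.

The `Bool` index `false` corresponds to the index `1` of the paper and `true` to `2`;
for an index `i`, the other index `ĩ` is `!i`. -/
structure QOData where
  /-- the number `e ≥ 1` of characteristic terms -/
  e : ℕ
  he : 1 ≤ e
  /-- the characteristic exponents `λ_{u,j}` for `u ∈ {1,2}`, `j = 1,…,e` -/
  lam0 : Bool → ℕ → ℚ
  /-- the derived exponents `λ^{(k)}_{u,j}(i)`; the arguments are, in order, `i u k j`,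
  with `k = 0,…,e−1` and `j = 1,…,e−k` -/
  lam : Bool → Bool → ℕ → ℕ → ℚ
  /-- the numerators `n_u^{(k)}(i)`; the arguments are, in order, `i u k` -/
  n : Bool → Bool → ℕ → ℤ
  /-- the denominators `m_u^{(k)}(i) ≥ 1`; the arguments are, in order, `i u k` -/
  m : Bool → Bool → ℕ → ℕ
  /-- `r_i^{(k)}`; the arguments are, in order, `i k` -/
  r : Bool → ℕ → ℕ
  /-- `s_i^{(k)}`; the arguments are, in order, `i k` -/
  s : Bool → ℕ → ℕ
  /-- the leading exponents are positive -/
  pos : ∀ u, 0 < lam0 u 1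
  /-- the exponents are nondecreasing in `j` -/
  mono : ∀ u j, 1 ≤ j → j < e → lam0 u j ≤ lam0 u (j + 1)
  /-- each characteristic pair is essential: it does not lie in the subgroup of `ℚ²`
  generated by `ℤ²` together with the earlier pairs -/
  essential : ∀ j, 1 ≤ j → j ≤ e →
    (lam0 false j, lam0 true j) ∉
      AddSubgroup.closure
        ((Set.range fun p : ℤ × ℤ => ((p.1 : ℚ), (p.2 : ℚ))) ∪
          {q : ℚ × ℚ | ∃ l, 1 ≤ l ∧ l < j ∧ q = (lam0 false l, lam0 true l)})
  /-- `λ^{(0)}_{u,j}(i) = λ_{u,j}` -/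
  base : ∀ i u j, lam i u 0 j = lam0 u j
  /-- the denominators are at least 1 -/
  m_pos : ∀ i u k, k ≤ e - 1 → 1 ≤ m i u k
  /-- the leading exponents are written in lowest terms -/
  cop : ∀ i u k, k ≤ e - 1 → Int.gcd (n i u k) (m i u k : ℤ) = 1
  /-- `λ^{(k)}_{u,1}(i) = n_u^{(k)}(i) / m_u^{(k)}(i)` -/
  lead : ∀ i u k, k ≤ e - 1 → lam i u k 1 = (n i u k : ℚ) / (m i u k : ℚ)
  /-- `m_ĩ^{(k)}(i)·s_i^{(k)} − n_ĩ^{(k)}(i)·r_i^{(k)} = 1` -/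
  rs_det : ∀ i k, k ≤ e - 1 →
    (m i (!i) k : ℤ) * (s i k : ℤ) - n i (!i) k * (r i k : ℤ) = 1
  /-- `r_i^{(k)}` and `s_i^{(k)}` are the smallest nonnegative integers satisfying
  the determinant condition -/
  rs_min : ∀ i k, k ≤ e - 1 → ∀ r' s' : ℕ,
    (m i (!i) k : ℤ) * (s' : ℤ) - n i (!i) k * (r' : ℤ) = 1 → r i k ≤ r' ∧ s i k ≤ s'
  /-- the recursion for `λ^{(k+1)}_{ĩ,j}(i)`, where `d_•^{(k)}(i) = lcm(m₁^{(k)}(i), m₂^{(k)}(i))` -/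
  rec_other : ∀ i k j, k + 1 ≤ e - 1 → 1 ≤ j → j ≤ e - (k + 1) →
    lam i (!i) (k + 1) j =
      (m i (!i) k : ℚ) *
        (lam i (!i) k (j + 1) - lam i (!i) k 1 +
          (Nat.lcm (m i false k) (m i true k) : ℚ) * lam i (!i) k 1)
  /-- the recursion for `λ^{(k+1)}_{i,j}(i)`, where
  `b_i^{(k)} = d_•^{(k)}(i) / m_ĩ^{(k)}(i)` -/
  rec_self : ∀ i k j, k + 1 ≤ e - 1 → 1 ≤ j → j ≤ e - (k + 1) →
    lam i i (k + 1) j =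
      ((Nat.lcm (m i false k) (m i true k) / m i (!i) k : ℕ) : ℚ) *
        (lam i i k (j + 1) - lam i i k 1 +
          (Nat.lcm (m i false k) (m i true k) : ℚ) * lam i i k 1) +
      ((Nat.lcm (m i false k) (m i true k) / m i (!i) k : ℕ) : ℚ) * (r i k : ℚ) *
        lam i i k 1 * lam i (!i) (k + 1) j

namespace QOData

variable (D : QOData)

/-- `d_•^{(k)}(i) = lcm(m₁^{(k)}(i), m₂^{(k)}(i))` -/
def dd (i : Bool) (k : ℕ) : ℕ := Nat.lcm (D.m i false k) (D.m i true k)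

/-- `b_i^{(k)} = d_•^{(k)}(i) / m_ĩ^{(k)}(i)` -/
def b (i : Bool) (k : ℕ) : ℕ := D.dd i k / D.m i (!i) k

/-- `c_•^{(k)}(i) = gcd(n₁^{(k)}(i), n₂^{(k)}(i))` -/
def c (i : Bool) (k : ℕ) : ℕ := Int.gcd (D.n i false k) (D.n i true k)

/-- `d^{(k)}(i) = ∏_{l=k}^{e−1} d_•^{(l)}(i)`, the degree of the `k`-th derived surface -/
def dTot (i : Bool) (k : ℕ) : ℕ := ∏ l ∈ Finset.Ico k D.e, D.dd i l

end QOData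


section helpers

lemma qo_mini (g m1g m2g n1 n2 r s al be P1 P2 P3 : ℤ)
    (hW : m2g * n1 * al + m1g * be = 1)
    (hBx : g * m2g * s - n2 * r = 1)
    (hP : P3 * (g * m1g * m2g) = P1 * (n1 * m2g) + P2 * (n2 * m1g)) :
    ∃ X Y : ℤ, X * m1g = P1 ∧ X * (r * n1 * m2g) + Y * (g * m2g) = P2 := by
  refine ⟨be * P1 - al * n2 * P2 + g * m2g * al * P3,
          -(n1 * m2g) * P1 + (s - n2 * m1g) * P2 + (g * m1g * m2g - r) * P3, ?_, ?_⟩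
  · linear_combination al * hP + P1 * hW
  · linear_combination (g * m2g - r * be) * hP + P2 * hBx +
      (r * (g * m2g * P3 - n2 * P2)) * hW

lemma qo_stepCore (n1 m1 n2 m2 r s n1p m1p n2p m2p rp sp a b c dd g gp d : ℤ)
    (hg : g ≠ 0) (hgp : gp ≠ 0)
    (hm2 : (m2 : ℚ) ≠ 0) (hm1p : (m1p : ℚ) ≠ 0)
    (hggcd : (Int.gcd m1 m2 : ℤ) = g)
    (hg1 : g ∣ m1) (hg2 : g ∣ m2) (hgd : g * d = m1 * m2)
    (hgp1 : gp ∣ m1p) (hgp2 : gp ∣ m2p) (hgpd : gp * d = m1p * m2p)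
    (cop1 : Int.gcd n1 m1 = 1)
    (hBx : m2 * s - n2 * r = 1) (hBy : m1p * sp - n1p * rp = 1)
    (hR1 : n1p * (m1 * m2) = m1p * (a * (n1 * m2) + b * (n2 * m1)))
    (hR2 : n2p * (m1 * m2) = m2p * (c * (n1 * m2) + dd * (n2 * m1))) :
    ∃ A B C D : ℤ, ∀ bf bt x1 y2 W1 W2 W1' W2' : ℚ,
      bf * (m2 : ℚ) = (d : ℚ) → bt * (m1p : ℚ) = (d : ℚ) →
      x1 * (m1 : ℚ) = (n1 : ℚ) → y2 * (m2p : ℚ) = (n2p : ℚ) →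
      W1' = a * W1 + b * W2 → W2' = c * W1 + dd * W2 →
      ((m1p : ℚ) * W1' = A * (bf * W1 + bf * r * x1 * ((m2 : ℚ) * W2)) + B * ((m2 : ℚ) * W2)
        ∧ bt * W2' + bt * rp * y2 * ((m1p : ℚ) * W1') =
          C * (bf * W1 + bf * r * x1 * ((m2 : ℚ) * W2)) + D * ((m2 : ℚ) * W2)) := by
  obtain ⟨m1g, e1g⟩ := hg1
  obtain ⟨m2g, e2g⟩ := hg2
  obtain ⟨m1gp, e1gp⟩ := hgp1
  obtain ⟨m2gp, e2gp⟩ := hgp2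
  subst e1g e2g e1gp e2gp
  have hd : d = g * m1g * m2g := by
    have h : g * d = g * (g * m1g * m2g) := by linear_combination hgd
    exact mul_left_cancel₀ hg h
  subst hd
  have hdgp : g * m1g * m2g = m1gp * (gp * m2gp) := by
    have h : gp * (g * m1g * m2g) = gp * (m1gp * (gp * m2gp)) := by linear_combination hgpd
    exact mul_left_cancel₀ hgp h
  have hcopn : Nat.Coprime n1.natAbs (g * m1g).natAbs := cop1
  have hgcdmul : Int.gcd (g * m2g * n1) (g * m1g) = Int.gcd (g * m2g) (g * m1g) := by
    have h : ((g * m2g * n1).natAbs) = (g * m2g).natAbs * n1.natAbs := by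
      rw [Int.natAbs_mul]
    unfold Int.gcd
    rw [h]
    exact Nat.Coprime.gcd_mul_right_cancel _ hcopn
  set al := Int.gcdA (g * m2g * n1) (g * m1g) with hal
  set be := Int.gcdB (g * m2g * n1) (g * m1g) with hbe
  have hW0 : g * m2g * n1 * al + g * m1g * be = g := by
    have h := Int.gcd_eq_gcd_ab (g * m2g * n1) (g * m1g)
    rw [hgcdmul] at h
    rw [Int.gcd_comm] at hggcd
    rw [hggcd] at h
    linear_combination -h
  have hW2 : m2g * n1 * al + m1g * be = 1 := by
    have h : g * (m2g * n1 * al + m1g * be) = g * 1 := by linear_combination hW0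
    exact mul_left_cancel₀ hg h
  have hBx' : g * m2g * s - n2 * r = 1 := by linear_combination hBx
  have hR1' : n1p * (g * m1g * m2g) =
      (gp * m1gp) * (a * (n1 * m2g) + b * (n2 * m1g)) := by
    have h : g * (n1p * (g * m1g * m2g)) =
        g * ((gp * m1gp) * (a * (n1 * m2g) + b * (n2 * m1g))) := by linear_combination hR1
    exact mul_left_cancel₀ hg h
  have hR2' : n2p * (g * m1g * m2g) =
      (gp * m2gp) * (c * (n1 * m2g) + dd * (n2 * m1g)) := by
    have h : g * (n2p * (g * m1g * m2g)) =
        g * ((gp * m2gp) * (c * (n1 * m2g) + dd * (n2 * m1g))) := by linear_combination hR2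
    exact mul_left_cancel₀ hg h
  have hPU : (n2p * m1gp * sp) * (g * m1g * m2g) =
      (rp * n2p * m1gp * a + m2gp * c) * (n1 * m2g) +
      (rp * n2p * m1gp * b + m2gp * dd) * (n2 * m1g) := by
    have key : gp * ((n2p * m1gp * sp) * (g * m1g * m2g)) =
        gp * ((rp * n2p * m1gp * a + m2gp * c) * (n1 * m2g) +
          (rp * n2p * m1gp * b + m2gp * dd) * (n2 * m1g)) := by
      linear_combination (n2p * (g * m1g * m2g)) * hBy + (rp * n2p) * hR1' + hR2'
    exact mul_left_cancel₀ hgp key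
  obtain ⟨A, B, hAB1, hAB2⟩ := qo_mini g m1g m2g n1 n2 r s al be
    (gp * m1gp * a) (gp * m1gp * b) n1p hW2 hBx' (by linear_combination hR1')
  obtain ⟨C, D, hCD1, hCD2⟩ := qo_mini g m1g m2g n1 n2 r s al be
    (rp * n2p * m1gp * a + m2gp * c) (rp * n2p * m1gp * b + m2gp * dd)
    (n2p * m1gp * sp) hW2 hBx' hPU
  refine ⟨A, B, C, D, ?_⟩
  intro bf bt x1 y2 W1 W2 W1' W2' hbf hbt hx1 hy2 hW1' hW2'
  have e1q : (A : ℚ) * m1g = gp * m1gp * a := by exact_mod_cast hAB1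
  have e2q : (A : ℚ) * (r * n1 * m2g) + B * (g * m2g) = gp * m1gp * b := by
    exact_mod_cast hAB2
  have e3q : (C : ℚ) * m1g = rp * n2p * m1gp * a + m2gp * c := by exact_mod_cast hCD1
  have e4q : (C : ℚ) * (r * n1 * m2g) + D * (g * m2g) =
      rp * n2p * m1gp * b + m2gp * dd := by exact_mod_cast hCD2
  have hdgpq : (g : ℚ) * m1g * m2g = m1gp * (gp * m2gp) := by exact_mod_cast hdgp
  have hbfq : bf = (m1g : ℚ) := by
    have h2 : ((g : ℚ) * m2g) ≠ 0 := by push_cast at hm2 ⊢; exact hm2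
    have h : bf * ((g : ℚ) * m2g) = (m1g : ℚ) * ((g : ℚ) * m2g) := by
      push_cast at hbf ⊢; linear_combination hbf
    exact mul_right_cancel₀ h2 h
  have hbtq : bt = (m2gp : ℚ) := by
    have h2 : ((gp : ℚ) * m1gp) ≠ 0 := by push_cast at hm1p ⊢; exact hm1p
    have h : bt * ((gp : ℚ) * m1gp) = (m2gp : ℚ) * ((gp : ℚ) * m1gp) := by
      push_cast at hbt ⊢; linear_combination hbt + hdgpq
    exact mul_right_cancel₀ h2 h
  have hx1q : x1 * ((g : ℚ) * m1g) = (n1 : ℚ) := by push_cast at hx1 ⊢; exact hx1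
  have hy2q : y2 * ((gp : ℚ) * m2gp) = (n2p : ℚ) := by push_cast at hy2 ⊢; exact hy2
  subst hbfq hbtq hW1' hW2'
  constructor
  · push_cast
    linear_combination (-W1) * e1q + (-W2) * e2q + (-((A : ℚ) * r * m2g * W2)) * hx1q
  · push_cast
    linear_combination (-W1) * e3q + (-W2) * e4q + (-((C : ℚ) * r * m2g * W2)) * hx1q +
      ((rp : ℚ) * m1gp * ((a : ℚ) * W1 + (b : ℚ) * W2)) * hy2q

lemma qo_lcm_dvd (n1 m1 n2 m2 n1p m1p n2p m2p a b c dd : ℤ)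
    (hm1 : 0 < m1) (hm2 : 0 < m2)
    (cop1p : Int.gcd n1p m1p = 1) (cop2p : Int.gcd n2p m2p = 1)
    (hR1 : n1p * (m1 * m2) = m1p * (a * (n1 * m2) + b * (n2 * m1)))
    (hR2 : n2p * (m1 * m2) = m2p * (c * (n1 * m2) + dd * (n2 * m1))) :
    (Int.lcm m1p m2p : ℤ) ∣ (Int.lcm m1 m2 : ℤ) := by
  set g : ℤ := (Int.gcd m1 m2 : ℤ) with hg
  have hgpos : (0 : ℤ) < g := by
    have h0 : Int.gcd m1 m2 ≠ 0 := by
      simp only [ne_eq, Int.gcd_eq_zero_iff, not_and_or]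
      exact Or.inl (by omega)
    have := Nat.pos_of_ne_zero h0
    rw [hg]
    exact_mod_cast this
  have hgne : g ≠ 0 := ne_of_gt hgpos
  obtain ⟨m1g, e1⟩ : g ∣ m1 := Int.gcd_dvd_left m1 m2
  obtain ⟨m2g, e2⟩ : g ∣ m2 := Int.gcd_dvd_right m1 m2
  have hgl : g * (Int.lcm m1 m2 : ℤ) = m1 * m2 := by
    have h := Int.gcd_mul_lcm m1 m2
    have h2 : ((Int.gcd m1 m2 * Int.lcm m1 m2 : ℕ) : ℤ) = ((m1 * m2).natAbs : ℤ) :=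
      congrArg _ (h.trans (Int.natAbs_mul m1 m2).symm)
    rw [Int.natAbs_of_nonneg (by positivity)] at h2
    push_cast at h2
    linarith [h2]
  set L : ℤ := (Int.lcm m1 m2 : ℤ) with hL
  have key1 : n1p * L = m1p * (a * (n1 * m2g) + b * (n2 * m1g)) := by
    have h : g * (n1p * L) = g * (m1p * (a * (n1 * m2g) + b * (n2 * m1g))) := by
      calc g * (n1p * L) = n1p * (g * L) := by ring
        _ = n1p * (m1 * m2) := by rw [hgl]
        _ = m1p * (a * (n1 * m2) + b * (n2 * m1)) := hR1
        _ = g * (m1p * (a * (n1 * m2g) + b * (n2 * m1g))) := by rw [e1, e2]; ring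
    exact mul_left_cancel₀ hgne h
  have key2 : n2p * L = m2p * (c * (n1 * m2g) + dd * (n2 * m1g)) := by
    have h : g * (n2p * L) = g * (m2p * (c * (n1 * m2g) + dd * (n2 * m1g))) := by
      calc g * (n2p * L) = n2p * (g * L) := by ring
        _ = n2p * (m1 * m2) := by rw [hgl]
        _ = m2p * (c * (n1 * m2) + dd * (n2 * m1)) := hR2
        _ = g * (m2p * (c * (n1 * m2g) + dd * (n2 * m1g))) := by rw [e1, e2]; ring
    exact mul_left_cancel₀ hgne h
  have d1 : m1p ∣ L := by
    have hco : IsCoprime m1p n1p := (Int.isCoprime_iff_gcd_eq_one.mpr cop1p).symm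
    exact hco.dvd_of_dvd_mul_left ⟨_, key1⟩
  have d2 : m2p ∣ L := by
    have hco : IsCoprime m2p n2p := (Int.isCoprime_iff_gcd_eq_one.mpr cop2p).symm
    exact hco.dvd_of_dvd_mul_left ⟨_, key2⟩
  exact Int.coe_lcm_dvd d1 d2

lemma qo_gcd_dvd (n1 m1 n2 m2 n1p m1p n2p m2p a b c dd : ℤ)
    (cop1 : Int.gcd n1 m1 = 1) (cop2 : Int.gcd n2 m2 = 1)
    (hR1 : n1p * (m1 * m2) = m1p * (a * (n1 * m2) + b * (n2 * m1)))
    (hR2 : n2p * (m1 * m2) = m2p * (c * (n1 * m2) + dd * (n2 * m1))) :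
    (Int.gcd n1 n2 : ℤ) ∣ (Int.gcd n1p n2p : ℤ) := by
  set H : ℤ := (Int.gcd n1 n2 : ℤ) with hH
  have hd1 : H ∣ n1 := Int.gcd_dvd_left n1 n2
  have hd2 : H ∣ n2 := Int.gcd_dvd_right n1 n2
  have hco1 : IsCoprime H m1 :=
    IsCoprime.of_isCoprime_of_dvd_left (Int.isCoprime_iff_gcd_eq_one.mpr cop1) hd1
  have hco2 : IsCoprime H m2 :=
    IsCoprime.of_isCoprime_of_dvd_left (Int.isCoprime_iff_gcd_eq_one.mpr cop2) hd2
  have hco : IsCoprime H (m1 * m2) := hco1.mul_right hco2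
  have k1 : H ∣ n1p := by
    apply hco.dvd_of_dvd_mul_right
    rw [hR1]
    obtain ⟨x1, hx1⟩ := hd1
    obtain ⟨x2, hx2⟩ := hd2
    exact ⟨m1p * (a * (x1 * m2) + b * (x2 * m1)), by rw [hx1, hx2]; ring⟩
  have k2 : H ∣ n2p := by
    apply hco.dvd_of_dvd_mul_right
    rw [hR2]
    obtain ⟨x1, hx1⟩ := hd1
    obtain ⟨x2, hx2⟩ := hd2
    exact ⟨m2p * (c * (x1 * m2) + dd * (x2 * m1)), by rw [hx1, hx2]; ring⟩
  exact Int.dvd_coe_gcd k1 k2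

lemma qo_int_gcd_cast (p q : ℕ) : Int.gcd (p : ℤ) (q : ℤ) = Nat.gcd p q := by
  simp [Int.gcd]

lemma qo_int_lcm_cast (p q : ℕ) : Int.lcm (p : ℤ) (q : ℤ) = Nat.lcm p q := by
  simp [Int.lcm]

end helpers

theorem qo_rel (D : QOData) : ∀ k, k ≤ D.e - 1 →
    ∃ a b c d a2 b2 c2 d2 : ℤ, ∀ j, 1 ≤ j → j ≤ D.e - k →
      (D.lam true false k j = a * D.lam false false k j + b * D.lam false true k j) ∧
      (D.lam true true k j = c * D.lam false false k j + d * D.lam false true k j) ∧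
      (D.lam false false k j = a2 * D.lam true false k j + b2 * D.lam true true k j) ∧
      (D.lam false true k j = c2 * D.lam true false k j + d2 * D.lam true true k j) := by
  intro k
  induction k with
  | zero =>
    intro _
    refine ⟨1, 0, 0, 1, 1, 0, 0, 1, fun j _ _ => ?_⟩
    refine ⟨?_, ?_, ?_, ?_⟩ <;> · simp only [D.base]; push_cast; ring
  | succ k ih =>
    intro hk1
    have he := D.he
    have hk' : k ≤ D.e - 1 := by omega
    obtain ⟨a, b, c, dd, a2, b2, c2, d2, hrel⟩ := ih hk'
    have h1le : (1 : ℕ) ≤ D.e - k := by omega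
    obtain ⟨hrel11, hrel12, hrel13, hrel14⟩ := hrel 1 le_rfl h1le
    have pf1 := D.m_pos false false k hk'
    have pf2 := D.m_pos false true k hk'
    have pt1 := D.m_pos true false k hk'
    have pt2 := D.m_pos true true k hk'
    have qf1 : ((D.m false false k : ℚ)) ≠ 0 := by
      have : (0:ℚ) < (D.m false false k : ℚ) := by exact_mod_cast pf1
      linarith
    have qf2 : ((D.m false true k : ℚ)) ≠ 0 := by
      have : (0:ℚ) < (D.m false true k : ℚ) := by exact_mod_cast pf2
      linarith
    have qt1 : ((D.m true false k : ℚ)) ≠ 0 := by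
      have : (0:ℚ) < (D.m true false k : ℚ) := by exact_mod_cast pt1
      linarith
    have qt2 : ((D.m true true k : ℚ)) ≠ 0 := by
      have : (0:ℚ) < (D.m true true k : ℚ) := by exact_mod_cast pt2
      linarith
    have lf1 := D.lead false false k hk'
    have lf2 := D.lead false true k hk'
    have lt1 := D.lead true false k hk'
    have lt2 := D.lead true true k hk'
    -- integer relations between level-k leading data
    have S1 : D.n true false k * ((D.m false false k : ℤ) * (D.m false true k : ℤ)) =
        (D.m true false k : ℤ) * (a * (D.n false false k * (D.m false true k : ℤ)) +
          b * (D.n false true k * (D.m false false k : ℤ))) := by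
      have h := hrel11
      rw [lf1, lf2, lt1] at h
      field_simp at h
      have hz : D.n true false k * ((D.m false false k * D.m false true k : ℕ) : ℤ) =
          (a * D.n false false k * (D.m false true k : ℤ) + b * D.n false true k * (D.m false false k : ℤ)) * (D.m true false k : ℤ) := by
        qify; push_cast; linear_combination h
      push_cast at hz
      linear_combination hz
    have S2 : D.n true true k * ((D.m false false k : ℤ) * (D.m false true k : ℤ)) =
        (D.m true true k : ℤ) * (c * (D.n false false k * (D.m false true k : ℤ)) +
          dd * (D.n false true k * (D.m false false k : ℤ))) := by
      have h := hrel12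
      rw [lf1, lf2, lt2] at h
      field_simp at h
      have hz : D.n true true k * ((D.m false false k * D.m false true k : ℕ) : ℤ) =
          (c * D.n false false k * (D.m false true k : ℤ) + dd * D.n false true k * (D.m false false k : ℤ)) * (D.m true true k : ℤ) := by
        qify; push_cast; linear_combination h
      push_cast at hz
      linear_combination hz
    have S3 : D.n false false k * ((D.m true false k : ℤ) * (D.m true true k : ℤ)) =
        (D.m false false k : ℤ) * (a2 * (D.n true false k * (D.m true true k : ℤ)) +
          b2 * (D.n true true k * (D.m true false k : ℤ))) := by
      have h := hrel13
      rw [lf1, lt1, lt2] at h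
      field_simp at h
      have hz : D.n false false k * ((D.m true false k * D.m true true k : ℕ) : ℤ) =
          (a2 * D.n true false k * (D.m true true k : ℤ) + b2 * D.n true true k * (D.m true false k : ℤ)) * (D.m false false k : ℤ) := by
        qify; push_cast; linear_combination h
      push_cast at hz
      linear_combination hz
    have S4 : D.n false true k * ((D.m true false k : ℤ) * (D.m true true k : ℤ)) =
        (D.m false true k : ℤ) * (c2 * (D.n true false k * (D.m true true k : ℤ)) +
          d2 * (D.n true true k * (D.m true false k : ℤ))) := by
      have h := hrel14
      rw [lf2, lt1, lt2] at h
      field_simp at h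
      have hz : D.n false true k * ((D.m true false k * D.m true true k : ℕ) : ℤ) =
          (c2 * D.n true false k * (D.m true true k : ℤ) + d2 * D.n true true k * (D.m true false k : ℤ)) * (D.m false true k : ℤ) := by
        qify; push_cast; linear_combination h
      push_cast at hz
      linear_combination hz
    -- equality of the lcms
    have hd : Nat.lcm (D.m true false k) (D.m true true k) =
        Nat.lcm (D.m false false k) (D.m false true k) := by
      have dv1 := qo_lcm_dvd (D.n false false k) (D.m false false k : ℤ)
        (D.n false true k) (D.m false true k : ℤ) (D.n true false k) (D.m true false k : ℤ)
        (D.n true true k) (D.m true true k : ℤ) a b c dd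
        (by exact_mod_cast pf1) (by exact_mod_cast pf2)
        (D.cop true false k hk') (D.cop true true k hk') S1 S2
      have dv2 := qo_lcm_dvd (D.n true false k) (D.m true false k : ℤ)
        (D.n true true k) (D.m true true k : ℤ) (D.n false false k) (D.m false false k : ℤ)
        (D.n false true k) (D.m false true k : ℤ) a2 b2 c2 d2
        (by exact_mod_cast pt1) (by exact_mod_cast pt2)
        (D.cop false false k hk') (D.cop false true k hk') S3 S4
      rw [qo_int_lcm_cast, qo_int_lcm_cast] at dv1 dv2
      exact_mod_cast Int.dvd_antisymm (by positivity) (by positivity) dv1 dv2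
    -- abbreviation facts for gcd/lcm
    have hGf : (0:ℤ) < (Nat.gcd (D.m false false k) (D.m false true k) : ℤ) := by
      exact_mod_cast Nat.gcd_pos_of_pos_left _ pf1
    have hGt : (0:ℤ) < (Nat.gcd (D.m true false k) (D.m true true k) : ℤ) := by
      exact_mod_cast Nat.gcd_pos_of_pos_left _ pt1
    have hGt2 : (0:ℤ) < (Nat.gcd (D.m true true k) (D.m true false k) : ℤ) := by
      exact_mod_cast Nat.gcd_pos_of_pos_left _ pt2
    have hGf2 : (0:ℤ) < (Nat.gcd (D.m false true k) (D.m false false k) : ℤ) := by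
      exact_mod_cast Nat.gcd_pos_of_pos_left _ pf2
    -- first stepCore call: source = recursion false, target = recursion true
    obtain ⟨A, B, C, Dm, hc1⟩ := qo_stepCore
      (D.n false false k) (D.m false false k : ℤ) (D.n false true k) (D.m false true k : ℤ)
      (D.r false k : ℤ) (D.s false k : ℤ)
      (D.n true false k) (D.m true false k : ℤ) (D.n true true k) (D.m true true k : ℤ)
      (D.r true k : ℤ) (D.s true k : ℤ) a b c dd
      (Nat.gcd (D.m false false k) (D.m false true k) : ℤ)
      (Nat.gcd (D.m true false k) (D.m true true k) : ℤ)
      (Nat.lcm (D.m false false k) (D.m false true k) : ℤ)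
      (ne_of_gt hGf) (ne_of_gt hGt)
      (by push_cast; exact qf2) (by push_cast; exact qt1)
      (by rw [qo_int_gcd_cast])
      (by exact_mod_cast Nat.gcd_dvd_left _ _) (by exact_mod_cast Nat.gcd_dvd_right _ _)
      (by exact_mod_cast Nat.gcd_mul_lcm _ _)
      (by exact_mod_cast Nat.gcd_dvd_left _ _) (by exact_mod_cast Nat.gcd_dvd_right _ _)
      (by rw [← hd]; exact_mod_cast Nat.gcd_mul_lcm _ _)
      (D.cop false false k hk')
      (by simpa using D.rs_det false k hk')
      (by simpa using D.rs_det true k hk')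
      S1 S2
    -- second stepCore call: source = recursion true (coords swapped), target = recursion false
    obtain ⟨A2, B2, C2, D2, hc2⟩ := qo_stepCore
      (D.n true true k) (D.m true true k : ℤ) (D.n true false k) (D.m true false k : ℤ)
      (D.r true k : ℤ) (D.s true k : ℤ)
      (D.n false true k) (D.m false true k : ℤ) (D.n false false k) (D.m false false k : ℤ)
      (D.r false k : ℤ) (D.s false k : ℤ) d2 c2 b2 a2
      (Nat.gcd (D.m true true k) (D.m true false k) : ℤ)
      (Nat.gcd (D.m false true k) (D.m false false k) : ℤ)
      (Nat.lcm (D.m false false k) (D.m false true k) : ℤ)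
      (ne_of_gt hGt2) (ne_of_gt hGf2)
      (by push_cast; exact qt1) (by push_cast; exact qf2)
      (by rw [qo_int_gcd_cast])
      (by exact_mod_cast Nat.gcd_dvd_left _ _) (by exact_mod_cast Nat.gcd_dvd_right _ _)
      (by rw [← hd, Nat.lcm_comm]; exact_mod_cast Nat.gcd_mul_lcm _ _)
      (by exact_mod_cast Nat.gcd_dvd_left _ _) (by exact_mod_cast Nat.gcd_dvd_right _ _)
      (by rw [Nat.lcm_comm]; exact_mod_cast Nat.gcd_mul_lcm _ _)
      (D.cop true true k hk')
      (by simpa using D.rs_det true k hk')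
      (by simpa using D.rs_det false k hk')
      (by linear_combination S4) (by linear_combination S3)
    refine ⟨A, B, C, Dm, D2, C2, B2, A2, ?_⟩
    intro j hj1 hj2
    have hj2' : j + 1 ≤ D.e - k := by omega
    obtain ⟨hA1, hA2, hA3, hA4⟩ := hrel (j + 1) (by omega) hj2'
    -- recursion equations
    have hrecT1 : D.lam true false (k+1) j = (D.m true false k : ℚ) *
        (D.lam true false k (j+1) - D.lam true false k 1 +
          (Nat.lcm (D.m false false k) (D.m false true k) : ℚ) * D.lam true false k 1) := by
      have h := D.rec_other true k j hk1 hj1 hj2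
      simp only [Bool.not_true] at h
      rw [hd] at h
      exact h
    have hrecF2 : D.lam false true (k+1) j = (D.m false true k : ℚ) *
        (D.lam false true k (j+1) - D.lam false true k 1 +
          (Nat.lcm (D.m false false k) (D.m false true k) : ℚ) * D.lam false true k 1) := by
      have h := D.rec_other false k j hk1 hj1 hj2
      simpa using h
    have hrecF1 : D.lam false false (k+1) j =
        ((Nat.lcm (D.m false false k) (D.m false true k) / D.m false true k : ℕ) : ℚ) *
        (D.lam false false k (j+1) - D.lam false false k 1 +
          (Nat.lcm (D.m false false k) (D.m false true k) : ℚ) * D.lam false false k 1) +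
        ((Nat.lcm (D.m false false k) (D.m false true k) / D.m false true k : ℕ) : ℚ) *
          (D.r false k : ℚ) * D.lam false false k 1 * D.lam false true (k+1) j := by
      have h := D.rec_self false k j hk1 hj1 hj2
      simpa using h
    have hrecT2 : D.lam true true (k+1) j =
        ((Nat.lcm (D.m false false k) (D.m false true k) / D.m true false k : ℕ) : ℚ) *
        (D.lam true true k (j+1) - D.lam true true k 1 +
          (Nat.lcm (D.m false false k) (D.m false true k) : ℚ) * D.lam true true k 1) +
        ((Nat.lcm (D.m false false k) (D.m false true k) / D.m true false k : ℕ) : ℚ) *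
          (D.r true k : ℚ) * D.lam true true k 1 * D.lam true false (k+1) j := by
      have h := D.rec_self true k j hk1 hj1 hj2
      simp only [Bool.not_true] at h
      rw [hd] at h
      exact h
    -- instantiate stepCore conclusions
    have hbf : ((Nat.lcm (D.m false false k) (D.m false true k) / D.m false true k : ℕ) : ℚ) *
        (((D.m false true k : ℕ) : ℤ) : ℚ) =
        (((Nat.lcm (D.m false false k) (D.m false true k) : ℕ) : ℤ) : ℚ) := by
      have h : Nat.lcm (D.m false false k) (D.m false true k) / D.m false true k *
          D.m false true k = Nat.lcm (D.m false false k) (D.m false true k) :=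
        Nat.div_mul_cancel (Nat.dvd_lcm_right _ _)
      push_cast
      exact_mod_cast h
    have hbt : ((Nat.lcm (D.m false false k) (D.m false true k) / D.m true false k : ℕ) : ℚ) *
        (((D.m true false k : ℕ) : ℤ) : ℚ) =
        (((Nat.lcm (D.m false false k) (D.m false true k) : ℕ) : ℤ) : ℚ) := by
      have hdvd : D.m true false k ∣ Nat.lcm (D.m false false k) (D.m false true k) := by
        rw [← hd]; exact Nat.dvd_lcm_left _ _
      have h := Nat.div_mul_cancel hdvd
      push_cast
      exact_mod_cast h
    have hx1 : D.lam false false k 1 * (((D.m false false k : ℕ) : ℤ) : ℚ) =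
        ((D.n false false k : ℤ) : ℚ) := by
      rw [lf1]; push_cast; field_simp
    have hy2 : D.lam true true k 1 * (((D.m true true k : ℕ) : ℤ) : ℚ) =
        ((D.n true true k : ℤ) : ℚ) := by
      rw [lt2]; push_cast; field_simp
    have hW1' : (D.lam true false k (j+1) - D.lam true false k 1 +
          (Nat.lcm (D.m false false k) (D.m false true k) : ℚ) * D.lam true false k 1) =
        (a : ℚ) * (D.lam false false k (j+1) - D.lam false false k 1 +
          (Nat.lcm (D.m false false k) (D.m false true k) : ℚ) * D.lam false false k 1) +
        (b : ℚ) * (D.lam false true k (j+1) - D.lam false true k 1 +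
          (Nat.lcm (D.m false false k) (D.m false true k) : ℚ) * D.lam false true k 1) := by
      rw [hA1, hrel11]; ring
    have hW2' : (D.lam true true k (j+1) - D.lam true true k 1 +
          (Nat.lcm (D.m false false k) (D.m false true k) : ℚ) * D.lam true true k 1) =
        (c : ℚ) * (D.lam false false k (j+1) - D.lam false false k 1 +
          (Nat.lcm (D.m false false k) (D.m false true k) : ℚ) * D.lam false false k 1) +
        (dd : ℚ) * (D.lam false true k (j+1) - D.lam false true k 1 +
          (Nat.lcm (D.m false false k) (D.m false true k) : ℚ) * D.lam false true k 1) := by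
      rw [hA2, hrel12]; ring
    have hV1' : (D.lam false true k (j+1) - D.lam false true k 1 +
          (Nat.lcm (D.m false false k) (D.m false true k) : ℚ) * D.lam false true k 1) =
        (d2 : ℚ) * (D.lam true true k (j+1) - D.lam true true k 1 +
          (Nat.lcm (D.m false false k) (D.m false true k) : ℚ) * D.lam true true k 1) +
        (c2 : ℚ) * (D.lam true false k (j+1) - D.lam true false k 1 +
          (Nat.lcm (D.m false false k) (D.m false true k) : ℚ) * D.lam true false k 1) := by
      rw [hA4, hrel14]; ring
    have hV2' : (D.lam false false k (j+1) - D.lam false false k 1 +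
          (Nat.lcm (D.m false false k) (D.m false true k) : ℚ) * D.lam false false k 1) =
        (b2 : ℚ) * (D.lam true true k (j+1) - D.lam true true k 1 +
          (Nat.lcm (D.m false false k) (D.m false true k) : ℚ) * D.lam true true k 1) +
        (a2 : ℚ) * (D.lam true false k (j+1) - D.lam true false k 1 +
          (Nat.lcm (D.m false false k) (D.m false true k) : ℚ) * D.lam true false k 1) := by
      rw [hA3, hrel13]; ring
    obtain ⟨main11, main12⟩ := hc1
      ((Nat.lcm (D.m false false k) (D.m false true k) / D.m false true k : ℕ) : ℚ)
      ((Nat.lcm (D.m false false k) (D.m false true k) / D.m true false k : ℕ) : ℚ)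
      (D.lam false false k 1) (D.lam true true k 1)
      (D.lam false false k (j+1) - D.lam false false k 1 +
          (Nat.lcm (D.m false false k) (D.m false true k) : ℚ) * D.lam false false k 1)
      (D.lam false true k (j+1) - D.lam false true k 1 +
          (Nat.lcm (D.m false false k) (D.m false true k) : ℚ) * D.lam false true k 1)
      (D.lam true false k (j+1) - D.lam true false k 1 +
          (Nat.lcm (D.m false false k) (D.m false true k) : ℚ) * D.lam true false k 1)
      (D.lam true true k (j+1) - D.lam true true k 1 +
          (Nat.lcm (D.m false false k) (D.m false true k) : ℚ) * D.lam true true k 1)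
      hbf hbt hx1 hy2 hW1' hW2'
    obtain ⟨main21, main22⟩ := hc2
      ((Nat.lcm (D.m false false k) (D.m false true k) / D.m true false k : ℕ) : ℚ)
      ((Nat.lcm (D.m false false k) (D.m false true k) / D.m false true k : ℕ) : ℚ)
      (D.lam true true k 1) (D.lam false false k 1)
      (D.lam true true k (j+1) - D.lam true true k 1 +
          (Nat.lcm (D.m false false k) (D.m false true k) : ℚ) * D.lam true true k 1)
      (D.lam true false k (j+1) - D.lam true false k 1 +
          (Nat.lcm (D.m false false k) (D.m false true k) : ℚ) * D.lam true false k 1)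
      (D.lam false true k (j+1) - D.lam false true k 1 +
          (Nat.lcm (D.m false false k) (D.m false true k) : ℚ) * D.lam false true k 1)
      (D.lam false false k (j+1) - D.lam false false k 1 +
          (Nat.lcm (D.m false false k) (D.m false true k) : ℚ) * D.lam false false k 1)
      hbt hbf hy2 hx1 hV1' hV2'
    push_cast at main11 main12 main21 main22
    refine ⟨?_, ?_, ?_, ?_⟩
    · linear_combination hrecT1 + main11 - (A : ℚ) * hrecF1 -
        ((A : ℚ) * ((Nat.lcm (D.m false false k) (D.m false true k) / D.m false true k : ℕ) : ℚ) *
          (D.r false k : ℚ) * D.lam false false k 1 + (B : ℚ)) * hrecF2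
    · linear_combination hrecT2 +
        (((Nat.lcm (D.m false false k) (D.m false true k) / D.m true false k : ℕ) : ℚ) *
          (D.r true k : ℚ) * D.lam true true k 1) * hrecT1 + main12 - (C : ℚ) * hrecF1 -
        ((C : ℚ) * ((Nat.lcm (D.m false false k) (D.m false true k) / D.m false true k : ℕ) : ℚ) *
          (D.r false k : ℚ) * D.lam false false k 1 + (Dm : ℚ)) * hrecF2
    · linear_combination hrecF1 +
        (((Nat.lcm (D.m false false k) (D.m false true k) / D.m false true k : ℕ) : ℚ) *
          (D.r false k : ℚ) * D.lam false false k 1) * hrecF2 + main22 - (C2 : ℚ) * hrecT2 -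
        ((C2 : ℚ) * ((Nat.lcm (D.m false false k) (D.m false true k) / D.m true false k : ℕ) : ℚ) *
          (D.r true k : ℚ) * D.lam true true k 1 + (D2 : ℚ)) * hrecT1
    · linear_combination hrecF2 + main21 - (A2 : ℚ) * hrecT2 -
        ((A2 : ℚ) * ((Nat.lcm (D.m false false k) (D.m false true k) / D.m true false k : ℕ) : ℚ) *
          (D.r true k : ℚ) * D.lam true true k 1 + (B2 : ℚ)) * hrecT1

/-- For every `k = 0,…,e−1`: `c_•^{(k)}(1) = c_•^{(k)}(2)`. -/
theorem c_eq (D : QOData) (k : ℕ) (hk : k ≤ D.e - 1) :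
    D.c false k = D.c true k := by
  obtain ⟨a, b, c, dd, a2, b2, c2, d2, hrel⟩ := qo_rel D k hk
  have he := D.he
  have h1le : (1 : ℕ) ≤ D.e - k := by omega
  obtain ⟨hrel11, hrel12, hrel13, hrel14⟩ := hrel 1 le_rfl h1le
  have pf1 := D.m_pos false false k hk
  have pf2 := D.m_pos false true k hk
  have pt1 := D.m_pos true false k hk
  have pt2 := D.m_pos true true k hk
  have qf1 : ((D.m false false k : ℚ)) ≠ 0 := by
    have : (0:ℚ) < (D.m false false k : ℚ) := by exact_mod_cast pf1
    linarith
  have qf2 : ((D.m false true k : ℚ)) ≠ 0 := by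
    have : (0:ℚ) < (D.m false true k : ℚ) := by exact_mod_cast pf2
    linarith
  have qt1 : ((D.m true false k : ℚ)) ≠ 0 := by
    have : (0:ℚ) < (D.m true false k : ℚ) := by exact_mod_cast pt1
    linarith
  have qt2 : ((D.m true true k : ℚ)) ≠ 0 := by
    have : (0:ℚ) < (D.m true true k : ℚ) := by exact_mod_cast pt2
    linarith
  have lf1 := D.lead false false k hk
  have lf2 := D.lead false true k hk
  have lt1 := D.lead true false k hk
  have lt2 := D.lead true true k hk
  have S1 : D.n true false k * ((D.m false false k : ℤ) * (D.m false true k : ℤ)) =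
      (D.m true false k : ℤ) * (a * (D.n false false k * (D.m false true k : ℤ)) +
        b * (D.n false true k * (D.m false false k : ℤ))) := by
    have h := hrel11
    rw [lf1, lf2, lt1] at h
    field_simp at h
    have hz : D.n true false k * ((D.m false false k * D.m false true k : ℕ) : ℤ) =
        (a * D.n false false k * (D.m false true k : ℤ) +
          b * D.n false true k * (D.m false false k : ℤ)) * (D.m true false k : ℤ) := by
      qify; push_cast; linear_combination h
    push_cast at hz
    linear_combination hz
  have S2 : D.n true true k * ((D.m false false k : ℤ) * (D.m false true k : ℤ)) =
      (D.m true true k : ℤ) * (c * (D.n false false k * (D.m false true k : ℤ)) +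
        dd * (D.n false true k * (D.m false false k : ℤ))) := by
    have h := hrel12
    rw [lf1, lf2, lt2] at h
    field_simp at h
    have hz : D.n true true k * ((D.m false false k * D.m false true k : ℕ) : ℤ) =
        (c * D.n false false k * (D.m false true k : ℤ) +
          dd * D.n false true k * (D.m false false k : ℤ)) * (D.m true true k : ℤ) := by
      qify; push_cast; linear_combination h
    push_cast at hz
    linear_combination hz
  have S3 : D.n false false k * ((D.m true false k : ℤ) * (D.m true true k : ℤ)) =
      (D.m false false k : ℤ) * (a2 * (D.n true false k * (D.m true true k : ℤ)) +
        b2 * (D.n true true k * (D.m true false k : ℤ))) := by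
    have h := hrel13
    rw [lf1, lt1, lt2] at h
    field_simp at h
    have hz : D.n false false k * ((D.m true false k * D.m true true k : ℕ) : ℤ) =
        (a2 * D.n true false k * (D.m true true k : ℤ) +
          b2 * D.n true true k * (D.m true false k : ℤ)) * (D.m false false k : ℤ) := by
      qify; push_cast; linear_combination h
    push_cast at hz
    linear_combination hz
  have S4 : D.n false true k * ((D.m true false k : ℤ) * (D.m true true k : ℤ)) =
      (D.m false true k : ℤ) * (c2 * (D.n true false k * (D.m true true k : ℤ)) +
        d2 * (D.n true true k * (D.m true false k : ℤ))) := by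
    have h := hrel14
    rw [lf2, lt1, lt2] at h
    field_simp at h
    have hz : D.n false true k * ((D.m true false k * D.m true true k : ℕ) : ℤ) =
        (c2 * D.n true false k * (D.m true true k : ℤ) +
          d2 * D.n true true k * (D.m true false k : ℤ)) * (D.m false true k : ℤ) := by
      qify; push_cast; linear_combination h
    push_cast at hz
    linear_combination hz
  have dv1 := qo_gcd_dvd (D.n false false k) (D.m false false k : ℤ)
    (D.n false true k) (D.m false true k : ℤ) (D.n true false k) (D.m true false k : ℤ)
    (D.n true true k) (D.m true true k : ℤ) a b c dd
    (D.cop false false k hk) (D.cop false true k hk) S1 S2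
  have dv2 := qo_gcd_dvd (D.n true false k) (D.m true false k : ℤ)
    (D.n true true k) (D.m true true k : ℤ) (D.n false false k) (D.m false false k : ℤ)
    (D.n false true k) (D.m false true k : ℤ) a2 b2 c2 d2
    (D.cop true false k hk) (D.cop true true k hk) S3 S4
  show Int.gcd (D.n false false k) (D.n false true k) =
    Int.gcd (D.n true false k) (D.n true true k)
  exact_mod_cast Int.dvd_antisymm (by positivity) (by positivity) dv1 dv2
end

section
/- Define, for i ∈ {1,2}, integers ξ^{(k)}(i) for k = 0, …, e−1 by the downward recursion ξ^{(e−1)}(i) = (c_•^{(e−1)}(i) − 1)·(d_•^{(e−1)}(i) − 1) and, for 0 ≤ k ≤ e−2, ξ^{(k)}(i) = d^{(k+1)}(i)·(c_•^{(k)}(i) − 1)·(d_•^{(k)}(i) − 1) + ξ^{(k+1)}(i), where d^{(k)}(i) = ∏_{l=k}^{e−1} d_•^{(l)}(i). Then ξ^{(k)}(1) = ξ^{(k)}(2) for every k = 0, …, e−1. -/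
-- helper: den/num of n/m
lemma den_of_coprime (n : ℤ) (m : ℕ) (hm : 0 < m) (h : Int.gcd n m = 1) :
    ((n : ℚ) / (m : ℚ)).den = m := by
  have : (((n:ℚ)/(m:ℚ)).den : ℤ) = (m : ℤ) := by
    apply Rat.den_div_eq_of_coprime (by exact_mod_cast hm)
    simpa [Int.gcd] using h
  exact_mod_cast this

lemma den_dvd_of_mul_int (q : ℚ) (t : ℕ) (ht : 0 < t) (z : ℤ) (h : q * (t : ℚ) = (z : ℚ)) :
    q.den ∣ t := by
  have hq : q = (z : ℚ) / (t : ℚ) := by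
    field_simp at h ⊢
    linear_combination h
  have := Rat.den_dvd z t
  rw [Rat.divInt_eq_div] at this
  rw [hq]
  exact_mod_cast this

-- lcm quotient coprime
lemma lcm_div_coprime (m1 m2 : ℕ) (h1 : 0 < m1) (h2 : 0 < m2) :
    Nat.Coprime (Nat.lcm m1 m2 / m1) (Nat.lcm m1 m2 / m2) := by
  have hg : 0 < Nat.gcd m1 m2 := Nat.gcd_pos_of_pos_left _ h1
  have e1 : Nat.lcm m1 m2 / m1 = m2 / Nat.gcd m1 m2 := by
    rw [Nat.lcm, Nat.mul_div_assoc _ (Nat.gcd_dvd_right m1 m2), Nat.mul_div_cancel_left _ h1]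
  have e2 : Nat.lcm m1 m2 / m2 = m1 / Nat.gcd m1 m2 := by
    rw [Nat.lcm, Nat.mul_comm, Nat.mul_div_assoc _ (Nat.gcd_dvd_left m1 m2),
      Nat.mul_div_cancel_left _ h2]
  rw [e1, e2]
  exact (Nat.coprime_div_gcd_div_gcd hg).symm


-- gcd((d/m1)n1, (d/m2)n2) = gcd(n1,n2)
lemma gcd_scale_eq (n1 n2 : ℤ) (m1 m2 d : ℕ) (h1 : 0 < m1) (h2 : 0 < m2)
    (hd1 : m1 ∣ d) (hd2 : m2 ∣ d) (hdm : d ∣ m1 * m2)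
    (hcop : Nat.Coprime (d / m1) (d / m2))
    (c1 : Int.gcd n1 m1 = 1) (c2 : Int.gcd n2 m2 = 1) :
    Int.gcd (n1 * ((d / m1 : ℕ) : ℤ)) (n2 * ((d / m2 : ℕ) : ℤ)) = Int.gcd n1 n2 := by
  apply Nat.dvd_antisymm
  · -- g ∣ gcd n1 n2
    set g := Int.gcd (n1 * ((d / m1 : ℕ) : ℤ)) (n2 * ((d / m2 : ℕ) : ℤ)) with hg
    -- d/m1 ∣ m2 and d/m2 ∣ m1
    obtain ⟨t1, ht1⟩ := hd1
    have hq1 : d / m1 = t1 := by rw [ht1]; exact Nat.mul_div_cancel_left _ h1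
    have hdm2 : d / m1 ∣ m2 := by
      rw [hq1]
      exact (mul_dvd_mul_iff_left h1.ne').mp (ht1 ▸ hdm)
    obtain ⟨t2, ht2⟩ := hd2
    have hq2 : d / m2 = t2 := by rw [ht2]; exact Nat.mul_div_cancel_left _ h2
    have hdm1 : d / m2 ∣ m1 := by
      rw [hq2]
      have h' : m2 * t2 ∣ m2 * m1 := by
        rw [← ht2]; rw [mul_comm m1 m2] at hdm; exact hdm
      exact (mul_dvd_mul_iff_left h2.ne').mp h'
    -- g coprime to d/m1
    have key1 : Nat.Coprime g (d / m1) := by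
      set h := Nat.gcd g (d / m1) with hh
      have hm2' : h ∣ m2 := (Nat.gcd_dvd_right g (d/m1)).trans hdm2
      have hcn2 : Nat.Coprime h n2.natAbs := by
        have hc : Nat.Coprime n2.natAbs m2 := c2
        exact ((Nat.Coprime.coprime_dvd_left hm2' hc.symm).symm : Nat.Coprime n2.natAbs h).symm
      -- h ∣ g ∣ |n2 * (d/m2)| = |n2| * (d/m2)
      have hgw2 : g ∣ n2.natAbs * (d / m2) := by
        have := Int.gcd_dvd_right (a := n1 * ((d / m1 : ℕ) : ℤ)) (b := n2 * ((d / m2 : ℕ) : ℤ))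
        have h2' : (g : ℤ) ∣ n2 * ((d / m2 : ℕ) : ℤ) := this
        have := Int.natAbs_dvd_natAbs.mpr h2'
        simpa only [Int.natAbs_mul, Int.natAbs_natCast] using this
      have hhd : h ∣ d / m2 := by
        have : h ∣ n2.natAbs * (d / m2) := (Nat.gcd_dvd_left g (d/m1)).trans hgw2
        exact (Nat.Coprime.dvd_of_dvd_mul_left hcn2 this)
      have : h ∣ Nat.gcd (d / m1) (d / m2) := Nat.dvd_gcd (Nat.gcd_dvd_right g (d/m1)) hhd
      rw [hcop] at this
      exact Nat.eq_one_of_dvd_one this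
    have key2 : Nat.Coprime g (d / m2) := by
      set h := Nat.gcd g (d / m2) with hh
      have hm1' : h ∣ m1 := (Nat.gcd_dvd_right g (d/m2)).trans hdm1
      have hcn1 : Nat.Coprime h n1.natAbs := by
        have hc : Nat.Coprime n1.natAbs m1 := c1
        exact ((Nat.Coprime.coprime_dvd_left hm1' hc.symm).symm : Nat.Coprime n1.natAbs h).symm
      have hgw1 : g ∣ n1.natAbs * (d / m1) := by
        have h1' : (g : ℤ) ∣ n1 * ((d / m1 : ℕ) : ℤ) := Int.gcd_dvd_left _ _
        have := Int.natAbs_dvd_natAbs.mpr h1'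
        simpa only [Int.natAbs_mul, Int.natAbs_natCast] using this
      have hhd : h ∣ d / m1 := by
        have : h ∣ n1.natAbs * (d / m1) := (Nat.gcd_dvd_left g (d/m2)).trans hgw1
        exact (Nat.Coprime.dvd_of_dvd_mul_left hcn1 this)
      have : h ∣ Nat.gcd (d / m1) (d / m2) := Nat.dvd_gcd hhd (Nat.gcd_dvd_right g (d/m2))
      rw [hcop] at this
      exact Nat.eq_one_of_dvd_one this
    -- g ∣ n1, g ∣ n2
    have hn1 : (g : ℤ) ∣ n1 := by
      have hgw1 : g ∣ n1.natAbs * (d / m1) := by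
        have h1' : (g : ℤ) ∣ n1 * ((d / m1 : ℕ) : ℤ) := Int.gcd_dvd_left _ _
        have := Int.natAbs_dvd_natAbs.mpr h1'
        simpa only [Int.natAbs_mul, Int.natAbs_natCast] using this
      have hh : g ∣ n1.natAbs := (Nat.Coprime.dvd_of_dvd_mul_right key1 hgw1)
      exact Int.dvd_natAbs.mp (Int.natCast_dvd_natCast.mpr hh)
    have hn2 : (g : ℤ) ∣ n2 := by
      have hgw2 : g ∣ n2.natAbs * (d / m2) := by
        have h2' : (g : ℤ) ∣ n2 * ((d / m2 : ℕ) : ℤ) := Int.gcd_dvd_right _ _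
        have := Int.natAbs_dvd_natAbs.mpr h2'
        simpa only [Int.natAbs_mul, Int.natAbs_natCast] using this
      have hh : g ∣ n2.natAbs := (Nat.Coprime.dvd_of_dvd_mul_right key2 hgw2)
      exact Int.dvd_natAbs.mp (Int.natCast_dvd_natCast.mpr hh)
    exact Int.natCast_dvd_natCast.mp (Int.dvd_coe_gcd hn1 hn2)
  · apply Int.natCast_dvd_natCast.mp
    apply Int.dvd_coe_gcd
    · exact (Int.gcd_dvd_left _ _).mul_right _
    · exact (Int.gcd_dvd_right _ _).mul_right _


section StepCore
variable {m1 m2 m1p m2p d n1 n2 n1p n2p r1 s1 r2 s2 u11 u12 u21 u22 a t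
  A1 B1 B1p A2p v11 v12 v21 v22 XA YA XB YB af at' bf bt : ℚ}

variable (hm1 : m1 ≠ 0) (hm2 : m2 ≠ 0) (hm1p : m1p ≠ 0) (hm2p : m2p ≠ 0) (hd : d ≠ 0)
  (hA1 : A1 * m1 = d) (hB1 : B1 * m2 = d) (hB1p : B1p * m1p = d) (hA2p : A2p * m2p = d)
  (hn1p : n1p / m1p = u11 * (n1 / m1) + u12 * (n2 / m2))
  (hn2p : n2p / m2p = u21 * (n1 / m1) + u22 * (n2 / m2))
  (HS1 : m2 * s1 - n2 * r1 = 1)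
  (HS2 : m1p * s2 - n1p * r2 = 1)
  (HA : a * B1 + t * (A1 * n1) = 1)
  (hv11 : v11 = a * (m1p * u11) - t * n2 * (m1p * u12) + t * m2 * n1p)
  (hv12 : v12 = s1 * (m1p * u12) - r1 * n1p)
  (hv21 : v21 = a * (B1p * u21 + A2p * n2p * r2 * u11)
      - t * n2 * (B1p * u22 + A2p * n2p * r2 * u12) + t * m2 * (A2p * n2p * s2))
  (hv22 : v22 = s1 * (B1p * u22 + A2p * n2p * r2 * u12) - r1 * (A2p * n2p * s2))
  (hXB : XB = u11 * XA + u12 * YA)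
  (hYB : YB = u21 * XA + u22 * YA)
  (hat : at' = m2 * (YA - n2 / m2 + d * (n2 / m2)))
  (haf : af = B1 * (XA - n1 / m1 + d * (n1 / m1)) + B1 * r1 * (n1 / m1) * at')
  (hbf : bf = m1p * (XB - n1p / m1p + d * (n1p / m1p)))
  (hbt : bt = B1p * (YB - n2p / m2p + d * (n2p / m2p)) + B1p * r2 * (n2p / m2p) * bf)

include hm1 hm2 hm1p hm2p hd hA1 hB1 hB1p hA2p hn1p hn2p HS1 HS2 HA hv11 hv12 hv21 hv22
  hXB hYB hat haf hbf hbt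

set_option maxHeartbeats 2000000 in
lemma step_f : bf = v11 * af + v12 * at' := by
  have hA1' : A1 = d / m1 := by rw [eq_div_iff hm1]; exact hA1
  have hB1' : B1 = d / m2 := by rw [eq_div_iff hm2]; exact hB1
  have hB1p' : B1p = d / m1p := by rw [eq_div_iff hm1p]; exact hB1p
  have hA2p' : A2p = d / m2p := by rw [eq_div_iff hm2p]; exact hA2p
  have hn1p' : n1p = m1p * (u11 * (n1 / m1) + u12 * (n2 / m2)) := by
    rw [← hn1p]; field_simp
  have hn2p' : n2p = m2p * (u21 * (n1 / m1) + u22 * (n2 / m2)) := by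
    rw [← hn2p]; field_simp
  have hs1' : s1 = (1 + n2 * r1) / m2 := by field_simp; linarith
  have hs2' : s2 = (1 + n1p * r2) / m1p := by field_simp; linarith
  have hB1ne : B1 ≠ 0 := by
    intro h; rw [h, zero_mul] at hB1; exact hd hB1.symm
  have ha' : a = (1 - t * (A1 * n1)) / B1 := by field_simp; linarith
  subst hbf hXB hv11 hv12 haf hat
  rw [hs1', ha', hn1p', hA1', hB1']
  field_simp
  ring

set_option maxHeartbeats 4000000 in
lemma step_t : bt = v21 * af + v22 * at' := by
  have hA1' : A1 = d / m1 := by rw [eq_div_iff hm1]; exact hA1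
  have hB1' : B1 = d / m2 := by rw [eq_div_iff hm2]; exact hB1
  have hB1p' : B1p = d / m1p := by rw [eq_div_iff hm1p]; exact hB1p
  have hA2p' : A2p = d / m2p := by rw [eq_div_iff hm2p]; exact hA2p
  have hn1p' : n1p = m1p * (u11 * (n1 / m1) + u12 * (n2 / m2)) := by
    rw [← hn1p]; field_simp
  have hn2p' : n2p = m2p * (u21 * (n1 / m1) + u22 * (n2 / m2)) := by
    rw [← hn2p]; field_simp
  have hs1' : s1 = (1 + n2 * r1) / m2 := by field_simp; linarith
  have hs2' : s2 = (1 + n1p * r2) / m1p := by field_simp; linarith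
  have hB1ne : B1 ≠ 0 := by
    intro h; rw [h, zero_mul] at hB1; exact hd hB1.symm
  have ha' : a = (1 - t * (A1 * n1)) / B1 := by field_simp; linarith
  subst hbt hbf hXB hYB hv21 hv22 haf hat
  rw [hs2', hn1p', hn2p', hs1', ha', hA1', hB1', hB1p', hA2p']
  field_simp
  ring

omit hXB hYB hat haf hbf hbt in
set_option maxHeartbeats 2000000 in
lemma step_det : v11 * v22 - v12 * v21 = u11 * u22 - u12 * u21 := by
  have hA1' : A1 = d / m1 := by rw [eq_div_iff hm1]; exact hA1
  have hB1' : B1 = d / m2 := by rw [eq_div_iff hm2]; exact hB1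
  have hB1p' : B1p = d / m1p := by rw [eq_div_iff hm1p]; exact hB1p
  have hA2p' : A2p = d / m2p := by rw [eq_div_iff hm2p]; exact hA2p
  have hn1p' : n1p = m1p * (u11 * (n1 / m1) + u12 * (n2 / m2)) := by
    rw [← hn1p]; field_simp
  have hn2p' : n2p = m2p * (u21 * (n1 / m1) + u22 * (n2 / m2)) := by
    rw [← hn2p]; field_simp
  have hs1' : s1 = (1 + n2 * r1) / m2 := by field_simp; linarith
  have hs2' : s2 = (1 + n1p * r2) / m1p := by field_simp; linarith
  have hB1ne : B1 ≠ 0 := by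
    intro h; rw [h, zero_mul] at hB1; exact hd hB1.symm
  have ha' : a = (1 - t * (A1 * n1)) / B1 := by field_simp; linarith
  subst hv11 hv12 hv21 hv22
  rw [hs2', hn1p', hn2p', hs1', ha', hA1', hB1', hB1p', hA2p']
  field_simp
  ring

end StepCore


namespace QOHelp

/-- the two branches' level-`k` data differ by an `SL₂(ℤ)` matrix -/
def Rel (D : QOData) (k : ℕ) : Prop :=
  ∃ u11 u12 u21 u22 : ℤ,
    u11 * u22 - u12 * u21 = 1 ∧
    ∀ j, 1 ≤ j → j ≤ D.e - k →
      (D.lam true false k j =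
        (u11 : ℚ) * D.lam false false k j + (u12 : ℚ) * D.lam false true k j ∧
       D.lam true true k j =
        (u21 : ℚ) * D.lam false false k j + (u22 : ℚ) * D.lam false true k j)

lemma rel_zero (D : QOData) : Rel D 0 := by
  refine ⟨1, 0, 0, 1, by ring, fun j _ _ => ⟨?_, ?_⟩⟩ <;>
    simp [D.base]

lemma combo_scale (X Y Z mp m1 m2 dq u v : ℚ) (hmp : mp ≠ 0)
    (h : X / mp = u * (Y / m1) + v * (Z / m2)) :
    X * (dq / mp) = u * (Y * (dq / m1)) + v * (Z * (dq / m2)) := by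
  calc X * (dq / mp) = (X / mp) * dq := by ring
    _ = (u * (Y / m1) + v * (Z / m2)) * dq := by rw [h]
    _ = u * (Y * (dq / m1)) + v * (Z * (dq / m2)) := by ring

lemma den_dvd_lcm' (n1 n2 : ℤ) (m1 m2 D1 : ℕ) (q : ℚ) (u v : ℤ)
    (hm1 : 0 < m1) (hm2 : 0 < m2) (hD : 0 < D1) (h1 : m1 ∣ D1) (h2 : m2 ∣ D1)
    (hq : q = (u : ℚ) * ((n1 : ℚ) / (m1 : ℚ)) + (v : ℚ) * ((n2 : ℚ) / (m2 : ℚ))) :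
    q.den ∣ D1 := by
  apply den_dvd_of_mul_int q D1 hD (u * (n1 * ((D1 / m1 : ℕ) : ℤ)) + v * (n2 * ((D1 / m2 : ℕ) : ℤ)))
  have c1 : ((D1 / m1 : ℕ) : ℚ) = (D1 : ℚ) / (m1 : ℚ) :=
    Nat.cast_div h1 (by exact_mod_cast hm1.ne')
  have c2 : ((D1 / m2 : ℕ) : ℚ) = (D1 : ℚ) / (m2 : ℚ) :=
    Nat.cast_div h2 (by exact_mod_cast hm2.ne')
  simp only [Int.cast_add, Int.cast_mul, Int.cast_natCast, c1, c2]
  rw [hq]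
  have hm1' : (m1 : ℚ) ≠ 0 := by exact_mod_cast hm1.ne'
  have hm2' : (m2 : ℚ) ≠ 0 := by exact_mod_cast hm2.ne'
  field_simp

lemma gcd_unimodular (x y u11 u12 u21 u22 : ℤ) (h : u11 * u22 - u12 * u21 = 1) :
    Int.gcd (u11 * x + u12 * y) (u21 * x + u22 * y) = Int.gcd x y := by
  apply Nat.dvd_antisymm
  · apply Int.natCast_dvd_natCast.mp
    apply Int.dvd_coe_gcd
    · have h' : (Int.gcd (u11 * x + u12 * y) (u21 * x + u22 * y) : ℤ) ∣
          u22 * (u11 * x + u12 * y) - u12 * (u21 * x + u22 * y) :=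
        dvd_sub ((Int.gcd_dvd_left _ _).mul_left _) ((Int.gcd_dvd_right _ _).mul_left _)
      have hx : u22 * (u11 * x + u12 * y) - u12 * (u21 * x + u22 * y) = x := by
        linear_combination x * h
      rwa [hx] at h'
    · have h' : (Int.gcd (u11 * x + u12 * y) (u21 * x + u22 * y) : ℤ) ∣
          u11 * (u21 * x + u22 * y) - u21 * (u11 * x + u12 * y) :=
        dvd_sub ((Int.gcd_dvd_right _ _).mul_left _) ((Int.gcd_dvd_left _ _).mul_left _)
      have hy : u11 * (u21 * x + u22 * y) - u21 * (u11 * x + u12 * y) = y := by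
        linear_combination y * h
      rwa [hy] at h'
  · apply Int.natCast_dvd_natCast.mp
    exact Int.dvd_coe_gcd
      (dvd_add ((Int.gcd_dvd_left _ _).mul_left _) ((Int.gcd_dvd_right _ _).mul_left _))
      (dvd_add ((Int.gcd_dvd_left _ _).mul_left _) ((Int.gcd_dvd_right _ _).mul_left _))

variable (D : QOData)

lemma dd_eq {k : ℕ} (hk : k ≤ D.e - 1) (hR : Rel D k) : D.dd false k = D.dd true k := by
  obtain ⟨u11, u12, u21, u22, HU, hrel⟩ := hR
  have he := D.he
  have hj : 1 ≤ D.e - k := by omega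
  obtain ⟨h1, h2⟩ := hrel 1 le_rfl hj
  have pAf : 0 < D.m false false k := D.m_pos false false k hk
  have pAt : 0 < D.m false true k := D.m_pos false true k hk
  have pBf : 0 < D.m true false k := D.m_pos true false k hk
  have pBt : 0 < D.m true true k := D.m_pos true true k hk
  have HUq : (u11 : ℚ) * u22 - (u12 : ℚ) * u21 = 1 := by exact_mod_cast HU
  -- rewrite leads
  rw [D.lead true false k hk] at h1
  rw [D.lead true true k hk] at h2
  rw [D.lead false false k hk, D.lead false true k hk] at h1 h2
  -- dens
  have dBf : ((D.n true false k : ℚ) / (D.m true false k : ℚ)).den = D.m true false k :=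
    den_of_coprime _ _ pBf (D.cop true false k hk)
  have dBt : ((D.n true true k : ℚ) / (D.m true true k : ℚ)).den = D.m true true k :=
    den_of_coprime _ _ pBt (D.cop true true k hk)
  have dAf : ((D.n false false k : ℚ) / (D.m false false k : ℚ)).den = D.m false false k :=
    den_of_coprime _ _ pAf (D.cop false false k hk)
  have dAt : ((D.n false true k : ℚ) / (D.m false true k : ℚ)).den = D.m false true k :=
    den_of_coprime _ _ pAt (D.cop false true k hk)
  have posF : 0 < D.dd false k := Nat.pos_of_ne_zero (by
    simp [QOData.dd, Nat.lcm_ne_zero, pAf.ne', pAt.ne'])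
  have posT : 0 < D.dd true k := Nat.pos_of_ne_zero (by
    simp [QOData.dd, Nat.lcm_ne_zero, pBf.ne', pBt.ne'])
  apply Nat.dvd_antisymm
  · -- dd false ∣ dd true : show mAf, mAt divide dd true
    apply Nat.lcm_dvd
    · rw [← dAf]
      apply den_dvd_lcm' (D.n true false k) (D.n true true k) (D.m true false k)
        (D.m true true k) _ _ u22 (-u12) pBf pBt posT (Nat.dvd_lcm_left _ _)
        (Nat.dvd_lcm_right _ _)
      push_cast
      linear_combination (-(u22 : ℚ)) * h1 + (u12 : ℚ) * h2 -
        ((D.n false false k : ℚ) / (D.m false false k : ℚ)) * HUq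
    · rw [← dAt]
      apply den_dvd_lcm' (D.n true false k) (D.n true true k) (D.m true false k)
        (D.m true true k) _ _ (-u21) u11 pBf pBt posT (Nat.dvd_lcm_left _ _)
        (Nat.dvd_lcm_right _ _)
      push_cast
      linear_combination ((u21 : ℚ)) * h1 - (u11 : ℚ) * h2 -
        ((D.n false true k : ℚ) / (D.m false true k : ℚ)) * HUq
  · apply Nat.lcm_dvd
    · rw [← dBf]
      exact den_dvd_lcm' (D.n false false k) (D.n false true k) (D.m false false k)
        (D.m false true k) _ _ u11 u12 pAf pAt posF (Nat.dvd_lcm_left _ _)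
        (Nat.dvd_lcm_right _ _) h1
    · rw [← dBt]
      exact den_dvd_lcm' (D.n false false k) (D.n false true k) (D.m false false k)
        (D.m false true k) _ _ u21 u22 pAf pAt posF (Nat.dvd_lcm_left _ _)
        (Nat.dvd_lcm_right _ _) h2

lemma c_eq {k : ℕ} (hk : k ≤ D.e - 1) (hR : Rel D k) : D.c false k = D.c true k := by
  obtain ⟨u11, u12, u21, u22, HU, hrel⟩ := hR
  have he := D.he
  have hdd : D.dd false k = D.dd true k := dd_eq D hk ⟨u11, u12, u21, u22, HU, hrel⟩
  have hj : 1 ≤ D.e - k := by omega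
  obtain ⟨h1, h2⟩ := hrel 1 le_rfl hj
  have pAf : 0 < D.m false false k := D.m_pos false false k hk
  have pAt : 0 < D.m false true k := D.m_pos false true k hk
  have pBf : 0 < D.m true false k := D.m_pos true false k hk
  have pBt : 0 < D.m true true k := D.m_pos true true k hk
  rw [D.lead true false k hk] at h1
  rw [D.lead true true k hk] at h2
  rw [D.lead false false k hk, D.lead false true k hk] at h1 h2
  obtain ⟨d, hd⟩ : ∃ d, d = D.dd false k := ⟨_, rfl⟩
  have posF : 0 < d := by
    rw [hd]
    exact Nat.pos_of_ne_zero (by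
      simp [QOData.dd, Nat.lcm_ne_zero, pAf.ne', pAt.ne'])
  have dvAf : D.m false false k ∣ d := by rw [hd]; exact Nat.dvd_lcm_left _ _
  have dvAt : D.m false true k ∣ d := by rw [hd]; exact Nat.dvd_lcm_right _ _
  have dvBf : D.m true false k ∣ d := by rw [hd, hdd]; exact Nat.dvd_lcm_left _ _
  have dvBt : D.m true true k ∣ d := by rw [hd, hdd]; exact Nat.dvd_lcm_right _ _
  have hdmA : d ∣ D.m false false k * D.m false true k := by
    rw [hd]; exact Nat.lcm_dvd (dvd_mul_right _ _) (dvd_mul_left _ _)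
  have hdmB : d ∣ D.m true false k * D.m true true k := by
    rw [hd, hdd]; exact Nat.lcm_dvd (dvd_mul_right _ _) (dvd_mul_left _ _)
  have hcopA : Nat.Coprime (d / D.m false false k) (d / D.m false true k) := by
    rw [hd]; exact lcm_div_coprime _ _ pAf pAt
  have hcopB : Nat.Coprime (d / D.m true false k) (d / D.m true true k) := by
    rw [hd, hdd]; exact lcm_div_coprime _ _ pBf pBt
  -- scaled numerators
  have gA : Int.gcd (D.n false false k * ((d / D.m false false k : ℕ) : ℤ))
      (D.n false true k * ((d / D.m false true k : ℕ) : ℤ))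
      = Int.gcd (D.n false false k) (D.n false true k) :=
    gcd_scale_eq _ _ _ _ _ pAf pAt dvAf dvAt hdmA hcopA
      (D.cop false false k hk) (D.cop false true k hk)
  have gB : Int.gcd (D.n true false k * ((d / D.m true false k : ℕ) : ℤ))
      (D.n true true k * ((d / D.m true true k : ℕ) : ℤ))
      = Int.gcd (D.n true false k) (D.n true true k) :=
    gcd_scale_eq _ _ _ _ _ pBf pBt dvBf dvBt hdmB hcopB
      (D.cop true false k hk) (D.cop true true k hk)
  -- unimodular relation between w's
  have cast1 : ∀ (mm : ℕ), 0 < mm → mm ∣ d → ((d / mm : ℕ) : ℚ) = (d : ℚ) / (mm : ℚ) :=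
    fun mm hm hdv => Nat.cast_div hdv (by exact_mod_cast hm.ne')
  have hq1 : (D.n true false k : ℚ) * ((d / D.m true false k : ℕ) : ℚ)
      = (u11 : ℚ) * ((D.n false false k : ℚ) * ((d / D.m false false k : ℕ) : ℚ))
        + (u12 : ℚ) * ((D.n false true k : ℚ) * ((d / D.m false true k : ℕ) : ℚ)) := by
    rw [cast1 _ pBf dvBf, cast1 _ pAf dvAf, cast1 _ pAt dvAt]
    exact combo_scale _ _ _ _ _ _ _ _ _ (by exact_mod_cast pBf.ne') h1
  have hq2 : (D.n true true k : ℚ) * ((d / D.m true true k : ℕ) : ℚ)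
      = (u21 : ℚ) * ((D.n false false k : ℚ) * ((d / D.m false false k : ℕ) : ℚ))
        + (u22 : ℚ) * ((D.n false true k : ℚ) * ((d / D.m false true k : ℕ) : ℚ)) := by
    rw [cast1 _ pBt dvBt, cast1 _ pAf dvAf, cast1 _ pAt dvAt]
    exact combo_scale _ _ _ _ _ _ _ _ _ (by exact_mod_cast pBt.ne') h2
  have hw1 : D.n true false k * ((d / D.m true false k : ℕ) : ℤ)
      = u11 * (D.n false false k * ((d / D.m false false k : ℕ) : ℤ))
        + u12 * (D.n false true k * ((d / D.m false true k : ℕ) : ℤ)) := by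
    have h'' : ((D.n true false k * ((d / D.m true false k : ℕ) : ℤ) : ℤ) : ℚ)
        = ((u11 * (D.n false false k * ((d / D.m false false k : ℕ) : ℤ))
          + u12 * (D.n false true k * ((d / D.m false true k : ℕ) : ℤ)) : ℤ) : ℚ) := by
      simp only [Int.cast_add, Int.cast_mul, Int.cast_natCast]
      exact hq1
    exact_mod_cast h''
  have hw2 : D.n true true k * ((d / D.m true true k : ℕ) : ℤ)
      = u21 * (D.n false false k * ((d / D.m false false k : ℕ) : ℤ))
        + u22 * (D.n false true k * ((d / D.m false true k : ℕ) : ℤ)) := by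
    have h'' : ((D.n true true k * ((d / D.m true true k : ℕ) : ℤ) : ℤ) : ℚ)
        = ((u21 * (D.n false false k * ((d / D.m false false k : ℕ) : ℤ))
          + u22 * (D.n false true k * ((d / D.m false true k : ℕ) : ℤ)) : ℤ) : ℚ) := by
      simp only [Int.cast_add, Int.cast_mul, Int.cast_natCast]
      exact hq2
    exact_mod_cast h''
  show Int.gcd (D.n false false k) (D.n false true k)
      = Int.gcd (D.n true false k) (D.n true true k)
  rw [← gA, ← gB, hw1, hw2, gcd_unimodular _ _ _ _ _ _ HU]

lemma rel_succ {k : ℕ} (hk1 : k + 1 ≤ D.e - 1) (hR : Rel D k) : Rel D (k + 1) := by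
  obtain ⟨u11, u12, u21, u22, HU, hrel⟩ := hR
  have he := D.he
  have hk : k ≤ D.e - 1 := by omega
  have hdd : D.dd false k = D.dd true k := dd_eq D hk ⟨u11, u12, u21, u22, HU, hrel⟩
  have hj1' : 1 ≤ D.e - k := by omega
  obtain ⟨h1, h2⟩ := hrel 1 le_rfl hj1'
  rw [D.lead true false k hk] at h1
  rw [D.lead true true k hk] at h2
  rw [D.lead false false k hk, D.lead false true k hk] at h1 h2
  have pAf : 0 < D.m false false k := D.m_pos false false k hk
  have pAt : 0 < D.m false true k := D.m_pos false true k hk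
  have pBf : 0 < D.m true false k := D.m_pos true false k hk
  have pBt : 0 < D.m true true k := D.m_pos true true k hk
  obtain ⟨d, hd⟩ : ∃ d, d = D.dd false k := ⟨_, rfl⟩
  have posF : 0 < d := by
    rw [hd]
    exact Nat.pos_of_ne_zero (by
      simp [QOData.dd, Nat.lcm_ne_zero, pAf.ne', pAt.ne'])
  have dvAf : D.m false false k ∣ d := by rw [hd]; exact Nat.dvd_lcm_left _ _
  have dvAt : D.m false true k ∣ d := by rw [hd]; exact Nat.dvd_lcm_right _ _
  have dvBf : D.m true false k ∣ d := by rw [hd, hdd]; exact Nat.dvd_lcm_left _ _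
  have dvBt : D.m true true k ∣ d := by rw [hd, hdd]; exact Nat.dvd_lcm_right _ _
  have hlcmA : Nat.lcm (D.m false false k) (D.m false true k) = d := by rw [hd]; rfl
  have hlcmB : Nat.lcm (D.m true false k) (D.m true true k) = d := by rw [hd, hdd]; rfl
  -- Bezout coefficients
  have hgcd1 : Nat.Coprime (d / D.m false true k) (d / D.m false false k) := by
    rw [hd]
    exact (lcm_div_coprime _ _ pAf pAt).symm
  have hc1 : IsCoprime ((d / D.m false true k : ℕ) : ℤ) ((d / D.m false false k : ℕ) : ℤ) := by
    rw [Int.isCoprime_iff_gcd_eq_one]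
    exact hgcd1
  have hq2m1 : (d / D.m false true k) ∣ D.m false false k := by
    obtain ⟨t2, ht2⟩ := dvAt
    have hq : d / D.m false true k = t2 := by rw [ht2]; exact Nat.mul_div_cancel_left _ pAt
    have hdm : d ∣ D.m false true k * D.m false false k := by
      rw [hd]; exact Nat.lcm_dvd (dvd_mul_left _ _) (dvd_mul_right _ _)
    rw [hq]
    rw [ht2] at hdm
    exact (mul_dvd_mul_iff_left pAt.ne').mp hdm
  have hc2 : IsCoprime ((d / D.m false true k : ℕ) : ℤ) (D.n false false k) := by
    have hnm : IsCoprime (D.n false false k) ((D.m false false k : ℕ) : ℤ) :=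
      Int.isCoprime_iff_gcd_eq_one.mpr (D.cop false false k hk)
    exact (hnm.of_isCoprime_of_dvd_right (Int.natCast_dvd_natCast.mpr hq2m1)).symm
  obtain ⟨a, t, hbz⟩ := hc1.mul_right hc2
  -- integer matrix entries for level k+1
  obtain ⟨vz11, hvz11⟩ : ∃ v : ℤ, v = a * (D.m true false k * u11)
      - t * D.n false true k * (D.m true false k * u12)
      + t * D.m false true k * D.n true false k := ⟨_, rfl⟩
  obtain ⟨vz12, hvz12⟩ : ∃ v : ℤ, v = (D.s false k : ℤ) * (D.m true false k * u12)
      - (D.r false k : ℤ) * D.n true false k := ⟨_, rfl⟩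
  obtain ⟨vz21, hvz21⟩ : ∃ v : ℤ, v = a * (((d / D.m true false k : ℕ) : ℤ) * u21
        + ((d / D.m true true k : ℕ) : ℤ) * D.n true true k * (D.r true k : ℤ) * u11)
      - t * D.n false true k * (((d / D.m true false k : ℕ) : ℤ) * u22
        + ((d / D.m true true k : ℕ) : ℤ) * D.n true true k * (D.r true k : ℤ) * u12)
      + t * D.m false true k * (((d / D.m true true k : ℕ) : ℤ) * D.n true true k
        * (D.s true k : ℤ)) := ⟨_, rfl⟩
  obtain ⟨vz22, hvz22⟩ : ∃ v : ℤ, v = (D.s false k : ℤ) * (((d / D.m true false k : ℕ) : ℤ) * u22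
        + ((d / D.m true true k : ℕ) : ℤ) * D.n true true k * (D.r true k : ℤ) * u12)
      - (D.r false k : ℤ) * (((d / D.m true true k : ℕ) : ℤ) * D.n true true k
        * (D.s true k : ℤ)) := ⟨_, rfl⟩
  -- cast facts
  have hm1Q : (D.m false false k : ℚ) ≠ 0 := by exact_mod_cast pAf.ne'
  have hm2Q : (D.m false true k : ℚ) ≠ 0 := by exact_mod_cast pAt.ne'
  have hm1pQ : (D.m true false k : ℚ) ≠ 0 := by exact_mod_cast pBf.ne'
  have hm2pQ : (D.m true true k : ℚ) ≠ 0 := by exact_mod_cast pBt.ne'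
  have hdQ : (d : ℚ) ≠ 0 := by exact_mod_cast posF.ne'
  have hA1 : ((d / D.m false false k : ℕ) : ℚ) * (D.m false false k : ℚ) = (d : ℚ) := by
    rw [← Nat.cast_mul, Nat.div_mul_cancel dvAf]
  have hB1 : ((d / D.m false true k : ℕ) : ℚ) * (D.m false true k : ℚ) = (d : ℚ) := by
    rw [← Nat.cast_mul, Nat.div_mul_cancel dvAt]
  have hB1p : ((d / D.m true false k : ℕ) : ℚ) * (D.m true false k : ℚ) = (d : ℚ) := by
    rw [← Nat.cast_mul, Nat.div_mul_cancel dvBf]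
  have hA2p : ((d / D.m true true k : ℕ) : ℚ) * (D.m true true k : ℚ) = (d : ℚ) := by
    rw [← Nat.cast_mul, Nat.div_mul_cancel dvBt]
  have HS1 : (D.m false true k : ℚ) * (D.s false k : ℚ)
      - (D.n false true k : ℚ) * (D.r false k : ℚ) = 1 := by
    have := D.rs_det false k hk
    simp only [Bool.not_false] at this
    exact_mod_cast this
  have HS2 : (D.m true false k : ℚ) * (D.s true k : ℚ)
      - (D.n true false k : ℚ) * (D.r true k : ℚ) = 1 := by
    have := D.rs_det true k hk
    simp only [Bool.not_true] at this
    exact_mod_cast this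
  have HA : (a : ℚ) * ((d / D.m false true k : ℕ) : ℚ)
      + (t : ℚ) * (((d / D.m false false k : ℕ) : ℚ) * (D.n false false k : ℚ)) = 1 := by
    have h' := congrArg (fun z : ℤ => (z : ℚ)) hbz
    simp only [Int.cast_add, Int.cast_mul, Int.cast_natCast, Int.cast_one] at h'
    exact h'
  have hv11 : ((vz11 : ℤ) : ℚ) = (a : ℚ) * ((D.m true false k : ℚ) * (u11 : ℚ))
      - (t : ℚ) * (D.n false true k : ℚ) * ((D.m true false k : ℚ) * (u12 : ℚ))
      + (t : ℚ) * (D.m false true k : ℚ) * (D.n true false k : ℚ) := by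
    rw [hvz11]
    push_cast
    ring
  have hv12 : ((vz12 : ℤ) : ℚ) = (D.s false k : ℚ) * ((D.m true false k : ℚ) * (u12 : ℚ))
      - (D.r false k : ℚ) * (D.n true false k : ℚ) := by
    rw [hvz12]
    push_cast
    ring
  have hv21 : ((vz21 : ℤ) : ℚ) = (a : ℚ) * (((d / D.m true false k : ℕ) : ℚ) * (u21 : ℚ)
        + ((d / D.m true true k : ℕ) : ℚ) * (D.n true true k : ℚ) * (D.r true k : ℚ) * (u11 : ℚ))
      - (t : ℚ) * (D.n false true k : ℚ) * (((d / D.m true false k : ℕ) : ℚ) * (u22 : ℚ)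
        + ((d / D.m true true k : ℕ) : ℚ) * (D.n true true k : ℚ) * (D.r true k : ℚ) * (u12 : ℚ))
      + (t : ℚ) * (D.m false true k : ℚ) * (((d / D.m true true k : ℕ) : ℚ)
        * (D.n true true k : ℚ) * (D.s true k : ℚ)) := by
    rw [hvz21]
    simp only [Int.cast_add, Int.cast_sub, Int.cast_mul, Int.cast_natCast]
  have hv22 : ((vz22 : ℤ) : ℚ) = (D.s false k : ℚ) * (((d / D.m true false k : ℕ) : ℚ) * (u22 : ℚ)
        + ((d / D.m true true k : ℕ) : ℚ) * (D.n true true k : ℚ) * (D.r true k : ℚ) * (u12 : ℚ))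
      - (D.r false k : ℚ) * (((d / D.m true true k : ℕ) : ℚ)
        * (D.n true true k : ℚ) * (D.s true k : ℚ)) := by
    rw [hvz22]
    simp only [Int.cast_add, Int.cast_sub, Int.cast_mul, Int.cast_natCast]
  have hdetQ : ((vz11 : ℤ) : ℚ) * ((vz22 : ℤ) : ℚ) - ((vz12 : ℤ) : ℚ) * ((vz21 : ℤ) : ℚ)
      = (u11 : ℚ) * (u22 : ℚ) - (u12 : ℚ) * (u21 : ℚ) :=
    step_det hm1Q hm2Q hm1pQ hm2pQ hdQ hA1 hB1 hB1p hA2p h1 h2 HS1 HS2 HA hv11 hv12 hv21 hv22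
  refine ⟨vz11, vz12, vz21, vz22, ?_, ?_⟩
  · have : ((vz11 * vz22 - vz12 * vz21 : ℤ) : ℚ) = ((u11 * u22 - u12 * u21 : ℤ) : ℚ) := by
      push_cast
      linear_combination hdetQ
    have h' : vz11 * vz22 - vz12 * vz21 = u11 * u22 - u12 * u21 := by exact_mod_cast this
    rw [h', HU]
  · intro j hj1 hj2
    have hjj : j + 1 ≤ D.e - k := by omega
    obtain ⟨hXB, hYB⟩ := hrel (j + 1) (by omega) hjj
    have hat := D.rec_other false k j hk1 hj1 hj2
    simp only [Bool.not_false] at hat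
    rw [hlcmA, D.lead false true k hk] at hat
    have haf := D.rec_self false k j hk1 hj1 hj2
    simp only [Bool.not_false] at haf
    rw [hlcmA, D.lead false false k hk] at haf
    have hbf := D.rec_other true k j hk1 hj1 hj2
    simp only [Bool.not_true] at hbf
    rw [hlcmB, D.lead true false k hk] at hbf
    have hbt := D.rec_self true k j hk1 hj1 hj2
    simp only [Bool.not_true] at hbt
    rw [hlcmB, D.lead true true k hk] at hbt
    constructor
    · exact step_f hm1Q hm2Q hm1pQ hm2pQ hdQ hA1 hB1 hB1p hA2p h1 h2 HS1 HS2 HA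
        hv11 hv12 hv21 hv22 hXB hYB hat haf hbf hbt
    · exact step_t hm1Q hm2Q hm1pQ hm2pQ hdQ hA1 hB1 hB1p hA2p h1 h2 HS1 HS2 HA
        hv11 hv12 hv21 hv22 hXB hYB hat haf hbf hbt

end QOHelp

/-- If `ξ^{(k)}(i)` is defined by the downward recursion
`ξ^{(e−1)}(i) = (c_•^{(e−1)}(i) − 1)·(d_•^{(e−1)}(i) − 1)` and, for `0 ≤ k ≤ e−2`,
`ξ^{(k)}(i) = d^{(k+1)}(i)·(c_•^{(k)}(i) − 1)·(d_•^{(k)}(i) − 1) + ξ^{(k+1)}(i)`,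
then `ξ^{(k)}(1) = ξ^{(k)}(2)` for every `k = 0,…,e−1`. -/
theorem xi_eq (D : QOData) (ξ : Bool → ℕ → ℤ)
    (hbase : ∀ i, ξ i (D.e - 1) =
      ((D.c i (D.e - 1) : ℤ) - 1) * ((D.dd i (D.e - 1) : ℤ) - 1))
    (hrec : ∀ i k, k + 2 ≤ D.e →
      ξ i k = (D.dTot i (k + 1) : ℤ) * ((D.c i k : ℤ) - 1) * ((D.dd i k : ℤ) - 1) +
        ξ i (k + 1)) :
    ∀ k, k ≤ D.e - 1 → ξ false k = ξ true k := by
  have he := D.he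
  have hRel : ∀ k, k ≤ D.e - 1 → QOHelp.Rel D k := by
    intro k
    induction k with
    | zero => exact fun _ => QOHelp.rel_zero D
    | succ n ih => exact fun hn => QOHelp.rel_succ D hn (ih (by omega))
  have hddk : ∀ k, k ≤ D.e - 1 → D.dd false k = D.dd true k := fun k hk =>
    QOHelp.dd_eq D hk (hRel k hk)
  have hck : ∀ k, k ≤ D.e - 1 → D.c false k = D.c true k := fun k hk =>
    QOHelp.c_eq D hk (hRel k hk)
  have hdTot : ∀ k, D.dTot false k = D.dTot true k := by
    intro k
    unfold QOData.dTot
    apply Finset.prod_congr rfl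
    intro l hl
    simp only [Finset.mem_Ico] at hl
    exact hddk l (by omega)
  have main : ∀ m k, k ≤ D.e - 1 → D.e - 1 - k = m → ξ false k = ξ true k := by
    intro m
    induction m with
    | zero =>
      intro k hk hm
      have hke : k = D.e - 1 := by omega
      subst hke
      rw [hbase false, hbase true, hck _ le_rfl, hddk _ le_rfl]
    | succ n ih =>
      intro k hk hm
      have h2 : k + 2 ≤ D.e := by omega
      rw [hrec false k h2, hrec true k h2, hck k hk, hddk k hk, hdTot (k + 1),
        ih (k + 1) (by omega) (by omega)]
  intro k hk
  exact main (D.e - 1 - k) k hk rfl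
end
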